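/- Let G be a finite, connected, simple graph on vertex set V with diameter D, let S : V → {A,B} partition V into two nonempty groups V_A and V_B, and let h : V → {0,1} be non-degenerate (0 < Σ_k h(k) < |V|). Then for every integer d ≥ D and each group s ∈ {A,B}, the group-level perceived fairness Vis_d(s;h) = (1/|V_s|) Σ_{i ∈ V_s} F^(d)(i;h) equals the group acceptance rate (1/|V_s|) Σ_{i ∈ V_s} h(i). In particular, if demographic parity holds, i.e., (1/|V_A|) Σ_{i ∈ V_A} h(i) = (1/|V_B|) Σ_{i ∈ V_B} h(i), then the perceived fairness gap Δ_d(h) = Vis_d(A;h) − Vis_d(B;h) equals 0 for all d ≥ D. -/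
import Mathlib


/-- The `d`-hop neighborhood `N^(d)(i)`: vertices at graph distance at most `d` from `i`. -/
def hopNbhd {V : Type*} [Fintype V] (G : SimpleGraph V)
    [∀ i d, DecidablePred fun j : V => G.dist i j ≤ d] (i : V) (d : ℕ) : Finset V :=
  Finset.univ.filter (fun j => G.dist i j ≤ d)

/-- The `d`-neighborhood peer expectation `E_i^(d)[h]`. -/
noncomputable def peerExp {V : Type*} [Fintype V] (G : SimpleGraph V)
    [∀ i d, DecidablePred fun j : V => G.dist i j ≤ d] (i : V) (d : ℕ) (h : V → ℝ) : ℝ :=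
  (∑ j ∈ hopNbhd G i d, h j) / ((hopNbhd G i d).card : ℝ)

/-- The fairness perception indicator `F^(d)(i;h) = 1{E_i^(d)[h] ≤ h(i)}`. -/
noncomputable def perception {V : Type*} [Fintype V] (G : SimpleGraph V)
    [∀ i d, DecidablePred fun j : V => G.dist i j ≤ d] (i : V) (d : ℕ) (h : V → ℝ) : ℝ :=
  if peerExp G i d h ≤ h i then 1 else 0

/-- The group `V_s` of a two-group labeling `S : V → Bool`. -/
def groupSet {V : Type*} [Fintype V] [DecidableEq V] (S : V → Bool) (s : Bool) : Finset V :=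
  Finset.univ.filter (fun i => S i = s)

/-- Group-level perceived fairness `Vis_d(s;h)`. -/
noncomputable def Vis {V : Type*} [Fintype V] [DecidableEq V] (G : SimpleGraph V)
    [∀ i d, DecidablePred fun j : V => G.dist i j ≤ d]
    (S : V → Bool) (d : ℕ) (s : Bool) (h : V → ℝ) : ℝ :=
  (∑ i ∈ groupSet S s, perception G i d h) / ((groupSet S s).card : ℝ)

/-- for a connected graph of diameter `D`, two nonempty groups, and a
non-degenerate binary rule `h`, for every `d ≥ D` the group-level perceived fairness
equals the group acceptance rate; in particular demographic parity implies that the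
perceived fairness gap `Δ_d(h)` is zero for all `d ≥ D`. -/
theorem stmt_2 {V : Type*} [Fintype V] [DecidableEq V] (G : SimpleGraph V)
    [∀ i d, DecidablePred fun j : V => G.dist i j ≤ d]
    (hconn : G.Connected) (D : ℕ) (hD : ∀ i j : V, G.dist i j ≤ D)
    (S : V → Bool) (hA : (groupSet S true).Nonempty) (hB : (groupSet S false).Nonempty)
    (h : V → ℝ) (hbin : ∀ i, h i = 0 ∨ h i = 1)
    (hnd : 0 < ∑ k, h k ∧ ∑ k, h k < (Fintype.card V : ℝ)) :
    (∀ d : ℕ, D ≤ d → ∀ s : Bool,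
        Vis G S d s h = (∑ i ∈ groupSet S s, h i) / ((groupSet S s).card : ℝ)) ∧
    ((∑ i ∈ groupSet S true, h i) / ((groupSet S true).card : ℝ)
        = (∑ i ∈ groupSet S false, h i) / ((groupSet S false).card : ℝ) →
      ∀ d : ℕ, D ≤ d → Vis G S d true h - Vis G S d false h = 0) := by
  have hcard : (0:ℝ) < (Fintype.card V : ℝ) := by
    have := hnd.1.trans hnd.2
    exact_mod_cast this
  have hmain : ∀ d : ℕ, D ≤ d → ∀ s : Bool,
      Vis G S d s h = (∑ i ∈ groupSet S s, h i) / ((groupSet S s).card : ℝ) := by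
    intro d hd s
    have hnb : ∀ i : V, hopNbhd G i d = Finset.univ := by
      intro i
      apply Finset.eq_univ_iff_forall.mpr
      intro j
      simp only [hopNbhd, Finset.mem_filter, Finset.mem_univ, true_and]
      exact (hD i j).trans hd
    have hpe : ∀ i : V, peerExp G i d h = (∑ k, h k) / (Fintype.card V : ℝ) := by
      intro i
      simp [peerExp, hnb i, Finset.card_univ]
    have havg0 : 0 < (∑ k, h k) / (Fintype.card V : ℝ) := div_pos hnd.1 hcard
    have havg1 : (∑ k, h k) / (Fintype.card V : ℝ) < 1 :=
      (div_lt_one hcard).mpr hnd.2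
    have hperc : ∀ i : V, perception G i d h = h i := by
      intro i
      rcases hbin i with h0 | h1
      · simp [perception, hpe i, h0, not_le.mpr havg0]
      · simp [perception, hpe i, h1, le_of_lt havg1]
    simp [Vis, hperc]
  refine ⟨hmain, fun hpar d hd => ?_⟩
  rw [hmain d hd true, hmain d hd false, hpar, sub_self]
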